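/- The functors 𝒫² (covariant power set composed with itself) and 𝒫̄² (contravariant power set composed with itself, which is covariant) from Sets to Sets are not naturally isomorphic. In fact, any natural transformation α : 𝒫̄² → 𝒫² satisfies, for X = {x, y} with x ≠ y, α_X(𝒫(X)) = α_X({∅, {x}, {x,y}}), so no component α_X with |X| ≥ 2 is injective. -/

import Mathlib

/-- Double covariant power set functor action: double direct image. -/
def P2 {X Y : Type} (f : X → Y) (S : Set (Set X)) : Set (Set Y) := Set.image f '' S

/-- Double contravariant power set functor action (covariant): preimage test. -/
def Pbar2 {X Y : Type} (f : X → Y) (S : Set (Set X)) : Set (Set Y) := {B | f ⁻¹' B ∈ S}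

theorem no_natural_iso
    (α : ∀ X : Type, Set (Set X) → Set (Set X))
    (hnat : ∀ (X Y : Type) (f : X → Y) (S : Set (Set X)),
      α Y (Pbar2 f S) = P2 f (α X S))
    (X : Type) (x y : X) (hxy : x ≠ y) (hcov : ∀ z : X, z = x ∨ z = y) :
    α X Set.univ = α X {∅, {x}, {x, y}} ∧ ¬ Function.Injective (α X) := by
  -- Step 1: α X univ ⊆ {∅}, via naturality along Empty → X
  have h1 : α X Set.univ ⊆ {∅} := by
    have he := hnat Empty X Empty.elim Set.univ
    have hp : Pbar2 (Empty.elim : Empty → X) Set.univ = Set.univ := by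
      ext B; simp [Pbar2]; exact Set.eq_empty_of_isEmpty _
    rw [hp] at he
    rw [he]
    rintro A ⟨A', -, rfl⟩
    have : A' = ∅ := Set.eq_empty_of_isEmpty A'
    simp [this]
  -- Step 2: any S containing ∅ and univ has α X S = α X univ
  have key : ∀ S : Set (Set X), ∅ ∈ S → Set.univ ∈ S → α X S = α X Set.univ := by
    intro S h0 hu
    have hc : ∀ S' : Set (Set X), ∅ ∈ S' → Set.univ ∈ S' →
        Pbar2 (fun _ : X => ()) S' = (Set.univ : Set (Set Unit)) := by
      intro S' h0' hu'
      ext B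
      simp only [Pbar2, Set.mem_setOf_eq, Set.mem_univ, iff_true]
      by_cases h : () ∈ B
      · have hB : (fun _ : X => ()) ⁻¹' B = Set.univ := by ext z; simp [h]
        rw [hB]; exact hu'
      · have hB : (fun _ : X => ()) ⁻¹' B = ∅ := by ext z; simp [h]
        rw [hB]; exact h0'
    have e1 := hnat X Unit (fun _ => ()) S
    have e2 := hnat X Unit (fun _ => ()) Set.univ
    rw [hc S h0 hu] at e1
    rw [hc Set.univ (Set.mem_univ _) (Set.mem_univ _)] at e2
    have heq : P2 (fun _ : X => ()) (α X S) = P2 (fun _ : X => ()) (α X Set.univ) := by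
      rw [← e1, ← e2]
    -- α X S ⊆ {∅}
    have hS1 : α X S ⊆ {∅} := by
      intro A hA
      have hmem : (fun _ : X => ()) '' A ∈ P2 (fun _ : X => ()) (α X Set.univ) := by
        rw [← heq]; exact ⟨A, hA, rfl⟩
      obtain ⟨A', hA', hAA⟩ := hmem
      have hA'e : A' = ∅ := h1 hA'
      rw [hA'e, Set.image_empty] at hAA
      have : A = ∅ := by
        rw [eq_comm, Set.image_eq_empty] at hAA
        exact hAA
      simp [this]
    -- emptiness agrees
    have hemp : α X S = ∅ ↔ α X Set.univ = ∅ := by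
      constructor
      · intro h
        have : P2 (fun _ : X => ()) (α X Set.univ) = ∅ := by
          rw [← heq, h, P2, Set.image_empty]
        rw [P2, Set.image_eq_empty] at this; exact this
      · intro h
        have : P2 (fun _ : X => ()) (α X S) = ∅ := by
          rw [heq, h, P2, Set.image_empty]
        rw [P2, Set.image_eq_empty] at this; exact this
    rcases (Set.subset_singleton_iff_eq.mp hS1) with h | h <;>
      rcases (Set.subset_singleton_iff_eq.mp h1) with h' | h'
    · rw [h, h']
    · have := hemp.mp h
      rw [h'] at this
      simp at this
    · have := hemp.mpr h'
      rw [h] at this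
      simp at this
    · rw [h, h']
  have huniv : ({x, y} : Set X) = Set.univ := by
    ext z; simp only [Set.mem_insert_iff, Set.mem_singleton_iff, Set.mem_univ, iff_true]
    exact hcov z
  have hT : α X {∅, {x}, {x, y}} = α X Set.univ := by
    apply key
    · simp
    · rw [← huniv]; simp
  refine ⟨hT.symm, ?_⟩
  intro hinj
  have h2 : (Set.univ : Set (Set X)) = {∅, {x}, {x, y}} := hinj hT.symm
  have : ({y} : Set X) ∈ ({∅, {x}, {x, y}} : Set (Set X)) := by
    rw [← h2]; trivial
  rcases this with h | h | h
  · exact absurd h (by simp)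
  · have hy : y ∈ ({x} : Set X) := by rw [← h]; rfl
    have hyx : y = x := hy
    exact hxy hyx.symm
  · have hx : x ∈ ({y} : Set X) := by rw [h]; simp
    have hxy' : x = y := hx
    exact hxy hxy'
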